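/- For a closed subset X of ℝ^N, the convex hull of X equals X ∪ conv(ρX), where ρX is the inner boundary of X; similarly the closed convex hull of X equals X ∪ cconv(ρX). -/

import Mathlib

set_option maxHeartbeats 1000000

open Set

/-- Two points of the set `X` are adjacent: they are distinct and no point of `X`
lies strictly between them. -/
def AdjIn {E : Type*} [MetricSpace E] (X : Set E) (x y : E) : Prop :=
  x ∈ X ∧ y ∈ X ∧ x ≠ y ∧
    ¬ ∃ p ∈ X, p ≠ x ∧ p ≠ y ∧ dist x p + dist p y = dist x y

/-- The inner boundary of the set `X`: points adjacent to some other point of `X`. -/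
def innerBdry {E : Type*} [MetricSpace E] (X : Set E) : Set E :=
  {x | ∃ y, AdjIn X x y}

section Aux

variable {E : Type*} [NormedAddCommGroup E] [NormedSpace ℝ E]

/-- The set of points of `K` having a "free" open segment to another point of `K`. -/
def GoodSet (K : Set E) : Set E :=
  {a | ∃ b, a ∈ K ∧ b ∈ K ∧ a ≠ b ∧ openSegment ℝ a b ∩ K = ∅}

lemma open_sub_segment {a b q r : E} (hq : q ∈ segment ℝ a b) (hqa : q ≠ a)
    (hr : r ∈ openSegment ℝ a q) : r ∈ openSegment ℝ a b ∧ dist a r < dist a q := by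
  rw [segment_eq_image'] at hq
  obtain ⟨u, hu, rfl⟩ := hq
  rw [openSegment_eq_image'] at hr
  obtain ⟨t, ht, rfl⟩ := hr
  dsimp only at hqa ⊢
  have hba : b - a ≠ 0 := by
    rintro h
    apply hqa
    rw [h, smul_zero, add_zero]
  have hu0 : 0 < u := by
    rcases hu.1.lt_or_eq with h | h
    · exact h
    · exfalso; apply hqa; rw [← h, zero_smul, add_zero]
  have key : a + u • (b - a) - a = u • (b - a) := by abel
  constructor
  · rw [openSegment_eq_image']
    refine ⟨t * u, ⟨mul_pos ht.1 hu0, ?_⟩, ?_⟩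
    · calc t * u ≤ t * 1 := by nlinarith [ht.1.le, hu.2]
        _ < 1 := by simpa using ht.2
    · rw [key, smul_smul]
  · rw [key]
    have d1 : dist a (a + t • u • (b - a)) = (t * u) * ‖b - a‖ := by
      rw [smul_smul, dist_self_add_right, norm_smul, Real.norm_eq_abs,
        abs_of_pos (mul_pos ht.1 hu0)]
    have d2 : dist a (a + u • (b - a)) = u * ‖b - a‖ := by
      rw [dist_self_add_right, norm_smul, Real.norm_eq_abs, abs_of_pos hu0]
    have hb : 0 < ‖b - a‖ := norm_pos_iff.2 hba
    rw [d1, d2]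
    nlinarith [mul_pos (mul_pos hu0 hb) (sub_pos.2 ht.2)]

/-- If `a ∈ K` is not good, then along any segment towards `b ∈ K` there are points of `K`
arbitrarily close to `a`. -/
lemma reach {K : Set E} (hK : IsCompact K) {a b : E} (ha : a ∈ K) (hb : b ∈ K) (hab : a ≠ b)
    (hnot : a ∉ GoodSet K) {ε : ℝ} (hε : 0 < ε) (hεd : ε ≤ dist a b) :
    ∃ p ∈ K, p ∈ openSegment ℝ a b ∧ dist a p < ε := by
  classical
  set A : Set E := (K ∩ segment ℝ a b) ∩ {p | ε ≤ dist a p} with hA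
  have hseg : IsCompact (segment ℝ a b) := by
    rw [segment_eq_image']
    exact (isCompact_Icc).image (by continuity)
  have hAcl : IsClosed A :=
    (hK.isClosed.inter hseg.isClosed).inter
      (isClosed_le continuous_const (continuous_const.dist continuous_id))
  have hAc : IsCompact A := hseg.of_isClosed_subset hAcl (fun x hx => hx.1.2)
  have hAne : A.Nonempty := ⟨b, ⟨hb, right_mem_segment _ _ _⟩, hεd⟩
  obtain ⟨q, hqA, hqmin⟩ := hAc.exists_isMinOn hAne (continuous_const.dist continuous_id).continuousOn
  have hqK : q ∈ K := hqA.1.1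
  have hqseg : q ∈ segment ℝ a b := hqA.1.2
  have hqa : q ≠ a := by
    rintro rfl
    have : ε ≤ 0 := by simpa using hqA.2
    linarith
  -- a is not good, so the open segment (a, q) meets K
  have hne : (openSegment ℝ a q ∩ K).Nonempty := by
    by_contra h
    exact hnot ⟨q, ha, hqK, Ne.symm hqa, by
      simpa [Set.not_nonempty_iff_eq_empty] using h⟩
  obtain ⟨r, hrseg, hrK⟩ := hne
  obtain ⟨hrs, hrd⟩ := open_sub_segment hqseg hqa hrseg
  refine ⟨r, hrK, hrs, ?_⟩
  by_contra h
  push_neg at h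
  have : r ∈ A := ⟨⟨hrK, openSegment_subset_segment _ _ _ hrs⟩, h⟩
  exact absurd (hqmin this) (not_le.2 hrd)

end Aux

section Main

variable {E : Type*} [NormedAddCommGroup E] [NormedSpace ℝ E] [StrictConvexSpace ℝ E]

lemma ray_of_eq {u v : E} (hu : u ≠ 0) (hv : v ≠ 0) {s : ℝ} (hs0 : 0 < s) (hs1 : s < 1)
    (h : ‖(1 - s) • u + s • v‖ = (1 - s) * ‖u‖ + s * ‖v‖) :
    ∃ c : ℝ, 0 < c ∧ v = c • u := by
  have h1 : ‖(1 - s) • u + s • v‖ = ‖(1 - s) • u‖ + ‖s • v‖ := by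
    rw [norm_smul, norm_smul, Real.norm_eq_abs, Real.norm_eq_abs,
      abs_of_pos (by linarith), abs_of_pos hs0]
    exact h
  have hr : SameRay ℝ ((1 - s) • u) (s • v) := sameRay_iff_norm_add.mpr h1
  have hru : SameRay ℝ u ((1 - s) • u) := sameRay_smul_right_iff.2 (Or.inl (by linarith))
  have hrv : SameRay ℝ (s • v) v := sameRay_smul_left_iff.2 (Or.inl hs0.le)
  have hmid1 : (1 - s) • u ≠ 0 := smul_ne_zero (sub_ne_zero.2 (by linarith)) hu
  have hmid2 : s • v ≠ 0 := smul_ne_zero hs0.ne' hv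
  have h2 : SameRay ℝ u (s • v) := hru.trans hr (fun h => absurd h hmid1)
  have h3 : SameRay ℝ u v := h2.trans hrv (fun h => absurd h hmid2)
  obtain ⟨r, hr0, hru⟩ := h3.exists_pos_left hu hv
  exact ⟨r, hr0, hru.symm⟩

lemma core {ι : Type*} [Fintype ι] {K : Set E} (hK : IsCompact K) {z : E} (hz : z ∉ K)
    (w0 : ι → ℝ) (x0 : ι → E) (hw00 : ∀ i, 0 ≤ w0 i) (hw01 : ∑ i, w0 i = 1)
    (hx0 : ∀ i, x0 i ∈ K) (hzx : ∑ i, w0 i • x0 i = z) :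
    z ∈ convexHull ℝ (GoodSet K) := by
  classical
  set D : Set ((ι → ℝ) × (ι → E)) :=
    {p | (∀ i, 0 ≤ p.1 i) ∧ (∑ i, p.1 i = 1) ∧ (∀ i, p.2 i ∈ K) ∧ ∑ i, p.1 i • p.2 i = z}
    with hD
  have hDne : D.Nonempty := ⟨(w0, x0), hw00, hw01, hx0, hzx⟩
  have hT : IsCompact ((Set.pi univ fun _ : ι => Icc (0:ℝ) 1) ×ˢ (Set.pi univ fun _ : ι => K)) :=
    (isCompact_univ_pi fun _ => isCompact_Icc).prod (isCompact_univ_pi fun _ => hK)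
  have hDsub : D ⊆ (Set.pi univ fun _ : ι => Icc (0:ℝ) 1) ×ˢ (Set.pi univ fun _ : ι => K) := by
    rintro p ⟨h1, h2, h3, _⟩
    refine ⟨fun i _ => ⟨h1 i, ?_⟩, fun i _ => h3 i⟩
    calc p.1 i ≤ ∑ k, p.1 k := Finset.single_le_sum (fun k _ => h1 k) (Finset.mem_univ i)
      _ = 1 := h2
  have hDcl : IsClosed D := by
    have e1 : IsClosed {p : (ι → ℝ) × (ι → E) | ∀ i, 0 ≤ p.1 i} := by
      have : {p : (ι → ℝ) × (ι → E) | ∀ i, 0 ≤ p.1 i} = ⋂ i, {p | 0 ≤ p.1 i} := by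
        ext p; simp
      rw [this]
      exact isClosed_iInter fun i =>
        isClosed_le continuous_const ((continuous_apply i).comp continuous_fst)
    have e2 : IsClosed {p : (ι → ℝ) × (ι → E) | ∑ i, p.1 i = 1} :=
      isClosed_eq (continuous_finset_sum _ fun i _ => (continuous_apply i).comp continuous_fst)
        continuous_const
    have e3 : IsClosed {p : (ι → ℝ) × (ι → E) | ∀ i, p.2 i ∈ K} := by
      have : {p : (ι → ℝ) × (ι → E) | ∀ i, p.2 i ∈ K} = ⋂ i, {p | p.2 i ∈ K} := by
        ext p; simp
      rw [this]
      exact isClosed_iInter fun i =>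
        hK.isClosed.preimage ((continuous_apply i).comp continuous_snd)
    have e4 : IsClosed {p : (ι → ℝ) × (ι → E) | ∑ i, p.1 i • p.2 i = z} :=
      isClosed_eq (continuous_finset_sum _ fun i _ =>
        ((continuous_apply i).comp continuous_fst).smul
          ((continuous_apply i).comp continuous_snd)) continuous_const
    rw [hD, Set.setOf_and, Set.setOf_and, Set.setOf_and]
    exact e1.inter (e2.inter (e3.inter e4))
  have hDc : IsCompact D := hT.of_isClosed_subset hDcl hDsub
  have hg : Continuous (fun p : (ι → ℝ) × (ι → E) => ∑ i, p.1 i * dist (p.2 i) z) :=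
    continuous_finset_sum _ fun i _ =>
      ((continuous_apply i).comp continuous_fst).mul
        (((continuous_apply i).comp continuous_snd).dist continuous_const)
  obtain ⟨m, hmD, hmin⟩ := hDc.exists_isMinOn hDne hg.continuousOn
  set W : ι → ℝ := m.1 with hWdef
  set Y : ι → E := m.2 with hYdef
  have hW0 : ∀ i, 0 ≤ W i := hmD.1
  have hW1 : ∑ i, W i = 1 := hmD.2.1
  have hYK : ∀ i, Y i ∈ K := hmD.2.2.1
  have hYz : ∑ i, W i • Y i = z := hmD.2.2.2
  have key : ∀ i, W i ≠ 0 → Y i ∈ GoodSet K := by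
    intro i₀ hWi₀
    by_contra hYi₀
    have hWi₀p : 0 < W i₀ := (hW0 i₀).lt_of_ne (Ne.symm hWi₀)
    have hYnez : ∀ i, Y i - z ≠ 0 := fun i => sub_ne_zero.2 (fun h => hz (h ▸ hYK i))
    have hray : ∀ j, W j ≠ 0 → ∃ c : ℝ, 0 < c ∧ Y j - z = c • (Y i₀ - z) := by
      intro j hWj
      by_cases hYY : Y j = Y i₀
      · exact ⟨1, one_pos, by rw [hYY, one_smul]⟩
      have hWjp : 0 < W j := (hW0 j).lt_of_ne (Ne.symm hWj)
      have hji : j ≠ i₀ := fun h => hYY (by rw [h])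
      have hdpos : (0:ℝ) < dist (Y i₀) (Y j) := dist_pos.2 (Ne.symm hYY)
      set ρ : ℝ := W j / (W i₀ + W j) with hρ
      have hρ0 : 0 < ρ := div_pos hWjp (by linarith)
      have hρ1 : ρ < 1 := (div_lt_one (by linarith)).2 (by linarith)
      obtain ⟨p, hpK, hpseg, hpd⟩ := reach hK (hYK i₀) (hYK j) (Ne.symm hYY) hYi₀
        (mul_pos hρ0 hdpos) (by nlinarith)
      rw [openSegment_eq_image'] at hpseg
      obtain ⟨s, hs, hpe⟩ := hpseg
      dsimp only at hpe
      have h1s : 0 < 1 - s := by linarith [hs.2]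
      have hsd : dist (Y i₀) p = s * dist (Y i₀) (Y j) := by
        rw [← hpe, dist_self_add_right, norm_smul, Real.norm_eq_abs, abs_of_pos hs.1,
          dist_eq_norm']
      have hslt : s < ρ := by
        rw [hsd] at hpd
        exact lt_of_mul_lt_mul_right hpd hdpos.le
      set δ : ℝ := W i₀ * s / (1 - s) with hδ
      have hδ0 : 0 ≤ δ := div_nonneg (mul_nonneg hWi₀p.le hs.1.le) h1s.le
      have hδs : δ * (1 - s) = W i₀ * s := by rw [hδ]; field_simp
      have hδj : δ < W j := by
        rw [hρ, lt_div_iff₀ (by linarith : (0:ℝ) < W i₀ + W j)] at hslt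
        rw [hδ, div_lt_iff₀ h1s]; nlinarith
      set W' : ι → ℝ := fun i => W i + (if i = i₀ then δ else 0) - (if i = j then δ else 0)
        with hW'
      set Y' : ι → E := fun i => if i = i₀ then p else Y i with hY'
      have hY'i₀ : Y' i₀ = p := by simp [hY']
      have hY'j : Y' j = Y j := by simp [hY', hji]
      have sumW' : ∀ f : ι → ℝ, ∑ i, W' i * f i =
          (∑ i, W i * f i) + δ * f i₀ - δ * f j := by
        intro f
        have : ∀ i, W' i * f i = W i * f i + (if i = i₀ then δ * f i else 0)
            - (if i = j then δ * f i else 0) := by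
          intro i
          simp only [hW', add_mul, sub_mul, ite_mul, zero_mul]
        rw [Finset.sum_congr rfl fun i _ => this i, Finset.sum_sub_distrib,
          Finset.sum_add_distrib, Finset.sum_ite_eq' Finset.univ i₀ fun i => δ * f i,
          Finset.sum_ite_eq' Finset.univ j fun i => δ * f i]
        simp
      have sumW'v : ∑ i, W' i • Y' i = (∑ i, W i • Y' i) + δ • Y' i₀ - δ • Y' j := by
        have : ∀ i, W' i • Y' i = W i • Y' i + (if i = i₀ then δ • Y' i else 0)
            - (if i = j then δ • Y' i else 0) := by
          intro i
          simp only [hW', add_smul, sub_smul, ite_smul, zero_smul]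
        rw [Finset.sum_congr rfl fun i _ => this i, Finset.sum_sub_distrib,
          Finset.sum_add_distrib, Finset.sum_ite_eq' Finset.univ i₀ fun i => δ • Y' i,
          Finset.sum_ite_eq' Finset.univ j fun i => δ • Y' i]
        simp
      have sumWY' : ∑ i, W i • Y' i = (∑ i, W i • Y i) + (W i₀ • p - W i₀ • Y i₀) := by
        have : ∀ i, W i • Y' i = W i • Y i
            + (if i = i₀ then W i • p - W i • Y i else 0) := by
          intro i
          by_cases h : i = i₀ <;> simp [hY', h]
        rw [Finset.sum_congr rfl fun i _ => this i, Finset.sum_add_distrib,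
          Finset.sum_ite_eq' Finset.univ i₀ fun i => W i • p - W i • Y i]
        simp
      have sumWd : ∀ v : E, ∑ i, W i * dist (Y' i) v =
          (∑ i, W i * dist (Y i) v) + (W i₀ * dist p v - W i₀ * dist (Y i₀) v) := by
        intro v
        have : ∀ i, W i * dist (Y' i) v = W i * dist (Y i) v
            + (if i = i₀ then W i * dist p v - W i * dist (Y i) v else 0) := by
          intro i
          by_cases h : i = i₀ <;> simp [hY', h]
        rw [Finset.sum_congr rfl fun i _ => this i, Finset.sum_add_distrib,
          Finset.sum_ite_eq' Finset.univ i₀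
            fun i => W i * dist p v - W i * dist (Y i) v]
        simp
      have hcent : W i₀ • p + δ • p - W i₀ • Y i₀ - δ • Y j = 0 := by
        rw [← hpe]
        match_scalars
        · linear_combination (norm := ring1) (W i₀ * s) * mul_inv_cancel₀ h1s.ne'
        · linear_combination (norm := ring1) (-(W i₀ * s)) * mul_inv_cancel₀ h1s.ne'
      have hmem : (W', Y') ∈ D := by
        refine ⟨?_, ?_, ?_, ?_⟩
        · intro i
          simp only [hW']
          split_ifs with h1 h2 h2
          · linarith [hW0 i]
          · linarith [hW0 i, hδ0]
          · subst h2; linarith [hδj]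
          · linarith [hW0 i]
        · have := sumW' fun _ => 1
          simp only [mul_one] at this
          rw [this, hW1]; ring
        · intro i
          simp only [hY']
          split
          · exact hpK
          · exact hYK i
        · rw [sumW'v, sumWY', hYz, hY'i₀, hY'j]
          have expand : z + (W i₀ • p - W i₀ • Y i₀) + δ • p - δ • Y j
              = z + (W i₀ • p + δ • p - W i₀ • Y i₀ - δ • Y j) := by abel
          rw [expand, hcent, add_zero]
      -- cost comparison
      have hmge : (∑ i, W i * dist (Y i) z) ≤ ∑ i, W' i * dist (Y' i) z := hmin hmem
      have hcost : ∑ i, W' i * dist (Y' i) z = (∑ i, W i * dist (Y i) z)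
          + (W i₀ * dist p z - W i₀ * dist (Y i₀) z) + (δ * dist p z - δ * dist (Y j) z) := by
        rw [sumW' fun i => dist (Y' i) z, sumWd z, hY'i₀, hY'j]
        ring
      have hineq : W i₀ * dist (Y i₀) z + δ * dist (Y j) z ≤ (W i₀ + δ) * dist p z := by
        rw [hcost] at hmge
        nlinarith [hmge]
      have hpz : p - z = (1 - s) • (Y i₀ - z) + s • (Y j - z) := by
        rw [← hpe]
        module
      have hcvx : dist p z ≤ (1 - s) * dist (Y i₀) z + s * dist (Y j) z := by
        rw [dist_eq_norm, hpz, dist_eq_norm, dist_eq_norm]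
        calc ‖(1 - s) • (Y i₀ - z) + s • (Y j - z)‖
            ≤ ‖(1 - s) • (Y i₀ - z)‖ + ‖s • (Y j - z)‖ := norm_add_le _ _
          _ = (1 - s) * ‖Y i₀ - z‖ + s * ‖Y j - z‖ := by
              rw [norm_smul, norm_smul, Real.norm_eq_abs, Real.norm_eq_abs,
                abs_of_pos h1s, abs_of_pos hs.1]
      have hrev : (1 - s) * dist (Y i₀) z + s * dist (Y j) z ≤ dist p z := by
        have h1 : (1 - s) * (W i₀ * dist (Y i₀) z + δ * dist (Y j) z)
            ≤ (1 - s) * ((W i₀ + δ) * dist p z) := by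
          exact mul_le_mul_of_nonneg_left hineq h1s.le
        have h3 : δ * (1 - s) * dist p z = W i₀ * s * dist p z := by rw [hδs]
        have h4 : δ * (1 - s) * dist (Y j) z = W i₀ * s * dist (Y j) z := by rw [hδs]
        have h2 : W i₀ * ((1 - s) * dist (Y i₀) z + s * dist (Y j) z)
            ≤ W i₀ * dist p z := by nlinarith [h1, h3, h4]
        exact le_of_mul_le_mul_left h2 hWi₀p
      have heq : ‖(1 - s) • (Y i₀ - z) + s • (Y j - z)‖
          = (1 - s) * ‖Y i₀ - z‖ + s * ‖Y j - z‖ := by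
        rw [← hpz, ← dist_eq_norm, ← dist_eq_norm, ← dist_eq_norm]
        exact le_antisymm hcvx hrev
      exact ray_of_eq (hYnez i₀) (hYnez j) hs.1 hs.2 heq
    -- final contradiction: all points on one ray through z
    choose! c hc1 hc2 using hray
    have hcspec : ∀ i, W i • (Y i - z) = (W i * c i) • (Y i₀ - z) := by
      intro i
      by_cases h : W i ≠ 0
      · rw [hc2 i h, smul_smul]
      · push_neg at h
        simp [h]
    have hcnn : ∀ i, 0 ≤ W i * c i := by
      intro i
      by_cases h : W i ≠ 0
      · exact mul_nonneg (hW0 i) (hc1 i h).le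
      · push_neg at h; simp [h]
    have hsum0 : ∑ i, W i • (Y i - z) = 0 := by
      simp only [smul_sub]
      rw [Finset.sum_sub_distrib, hYz, ← Finset.sum_smul, hW1, one_smul, sub_self]
    rw [Finset.sum_congr rfl fun i _ => hcspec i, ← Finset.sum_smul] at hsum0
    have hcoef : 0 < ∑ i, W i * c i :=
      Finset.sum_pos' (fun i _ => hcnn i)
        ⟨i₀, Finset.mem_univ i₀, mul_pos hWi₀p (hc1 i₀ hWi₀)⟩
    rcases smul_eq_zero.1 hsum0 with h | h
    · exact hcoef.ne' h
    · exact hYnez i₀ h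
  -- conclude: z is a convex combination of good points
  have hfilter : ∑ i ∈ Finset.univ.filter (fun i => W i ≠ 0), W i = 1 := by
    rw [← hW1]
    exact Finset.sum_filter_ne_zero Finset.univ
  have hcm := Finset.centerMass_mem_convexHull (Finset.univ.filter (fun i => W i ≠ 0))
    (fun i _ => hW0 i) (by rw [hfilter]; norm_num)
    (fun i hi => key i (Finset.mem_filter.1 hi).2)
  have hcmz : (Finset.univ.filter (fun i => W i ≠ 0)).centerMass W Y = z := by
    rw [Finset.centerMass_eq_of_sum_1 _ _ hfilter, ← hYz]
    exact Finset.sum_filter_of_ne (fun i _ h => by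
      intro h0
      exact h (by rw [h0, zero_smul]))
  rwa [hcmz] at hcm

lemma innerBdry_subset (X : Set E) : innerBdry X ⊆ X := fun _ ⟨_, h⟩ => h.1

lemma goodSet_subset_innerBdry {X P : Set E} (hP : Convex ℝ P) :
    GoodSet (X ∩ P) ⊆ innerBdry X := by
  rintro a ⟨b, ⟨haX, haP⟩, ⟨hbX, hbP⟩, hab, hempty⟩
  refine ⟨b, haX, hbX, hab, ?_⟩
  rintro ⟨p, hpX, hpa, hpb, hdist⟩
  have hseg : p ∈ segment ℝ a b := mem_segment_iff_wbtw.2 (dist_add_dist_eq_iff.1 hdist)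
  have hopen : p ∈ openSegment ℝ a b := mem_openSegment_of_ne_left_right hpa.symm hpb.symm hseg
  have hpP : p ∈ P := hP.segment_subset haP hbP hseg
  have : p ∈ openSegment ℝ a b ∩ (X ∩ P) := ⟨hopen, hpX, hpP⟩
  rw [hempty] at this
  exact this

theorem main_subset {X : Set E} (hX : IsClosed X) :
    convexHull ℝ X ⊆ X ∪ convexHull ℝ (innerBdry X) := by
  intro z hzc
  by_cases hzX : z ∈ X
  · exact Or.inl hzX
  refine Or.inr ?_
  rw [convexHull_eq_union_convexHull_finite_subsets] at hzc
  simp only [mem_iUnion] at hzc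
  obtain ⟨t, htX, hzt⟩ := hzc
  set P : Set E := convexHull ℝ (t : Set E) with hP
  have hPc : IsCompact P := t.finite_toSet.isCompact_convexHull ℝ
  have hKc : IsCompact (X ∩ P) := hPc.inter_left hX
  have htK : (t : Set E) ⊆ X ∩ P := fun y hy => ⟨htX hy, subset_convexHull ℝ _ hy⟩
  have hzK : z ∈ convexHull ℝ (X ∩ P) := convexHull_mono htK hzt
  have hzKn : z ∉ X ∩ P := fun h => hzX h.1
  rw [mem_convexHull_iff_exists_fintype] at hzK
  obtain ⟨ι, hι, w, x, hw0, hw1, hxK, hzx⟩ := hzK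
  have := core hKc hzKn w x hw0 hw1 hxK hzx
  exact convexHull_mono (goodSet_subset_innerBdry (convex_convexHull ℝ _)) this

theorem stmt_7 {N : ℕ} (X : Set (EuclideanSpace ℝ (Fin N))) (hX : IsClosed X) :
    convexHull ℝ X = X ∪ convexHull ℝ (innerBdry X) ∧
    closure (convexHull ℝ X) = X ∪ closure (convexHull ℝ (innerBdry X)) := by
  have h1 : convexHull ℝ X = X ∪ convexHull ℝ (innerBdry X) := by
    apply le_antisymm (main_subset hX)
    apply Set.union_subset (subset_convexHull ℝ X)
    exact convexHull_mono (innerBdry_subset X)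
  refine ⟨h1, ?_⟩
  rw [h1, closure_union, hX.closure_eq]

end Main
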